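/- In the composite of the cup-cap cobordisms witnessing compactness of 2-Cob, the pushout identifies elements of 2n ⊔ 2n exactly when they are congruent mod n, so the pushout has exactly n elements, and the genus of each element of the pushout computed by the genus formula is 1 − 4 + 3 = 0. -/

import Mathlib

open scoped Classical

/-- The relation generating the pushout of a span `A ← k → B` of (finite) sets. -/
def PRel {k A B : Type} (f : k → A) (g : k → B) : A ⊕ B → A ⊕ B → Prop :=
  fun x y => ∃ z, x = Sum.inl (f z) ∧ y = Sum.inr (g z)

/-- The pushout of the span `A ← k → B`. -/
def Pushout {k A B : Type} (f : k → A) (g : k → B) : Type :=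
  Quot (PRel f g)

/-- Canonical map `ι_A : A → A ⊔_k B`. -/
def pInl {k A B : Type} (f : k → A) (g : k → B) (a : A) : Pushout f g :=
  Quot.mk _ (Sum.inl a)

/-- Canonical map `ι_B : B → A ⊔_k B`. -/
def pInr {k A B : Type} (f : k → A) (g : k → B) (b : B) : Pushout f g :=
  Quot.mk _ (Sum.inr b)

instance {k A B : Type} (f : k → A) (g : k → B) [Finite A] [Finite B] :
    Finite (Pushout f g) :=
  Quot.finite _

noncomputable instance {k A B : Type} (f : k → A) (g : k → B) [Fintype A] [Fintype B] :
    Fintype (Pushout f g) :=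
  Fintype.ofFinite _

/-- The genus formula of Definition 3.4:
`g(x) = 1 + Σ_{ι_A(a)=x}(g₁(a)−1) + Σ_{ι_B(b)=x}(g₂(b)−1) + #{y ∈ k : y ↦ x}`. -/
noncomputable def compGenus {k A B : Type} [Fintype k] [Fintype A] [Fintype B]
    (f : k → A) (g : k → B) (g1 : A → ℤ) (g2 : B → ℤ) (x : Pushout f g) : ℤ :=
  1 + (∑ a ∈ Finset.univ.filter (fun a => pInl f g a = x), (g1 a - 1))
    + (∑ b ∈ Finset.univ.filter (fun b => pInr f g b = x), (g2 b - 1))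
    + ((Finset.univ.filter (fun y : k => pInl f g (f y) = x)).card : ℤ)

/-- A combinatorial 2-cobordism from the finite set `m` to the finite set `n`. -/
structure Cob (m n : Type) : Type 1 where
  C : Type
  [fin : Fintype C]
  lm : m → C
  ln : n → C
  g : C → ℕ

attribute [instance] Cob.fin

/-- Composition of combinatorial 2-cobordisms via pushout of component sets
and the genus formula of Definition 3.4. -/
noncomputable def Cob.comp {m k n : Type} [Fintype k] (ψ : Cob k n) (φ : Cob m k) :
    Cob m n where
  C := Pushout φ.ln ψ.lm
  lm := fun x => pInl φ.ln ψ.lm (φ.lm x)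
  ln := fun y => pInr φ.ln ψ.lm (ψ.ln y)
  g := fun x =>
    (compGenus φ.ln ψ.lm (fun a => (φ.g a : ℤ)) (fun b => (ψ.g b : ℤ)) x).toNat

/-- Equivalence of combinatorial 2-cobordisms: a bijection of component sets
intertwining the structure maps and the genus functions. -/
def Cob.Equiv {m n : Type} (φ φ' : Cob m n) : Prop :=
  ∃ χ : φ.C ≃ φ'.C,
    (∀ x, χ (φ.lm x) = φ'.lm x) ∧ (∀ y, χ (φ.ln y) = φ'.ln y) ∧
    (∀ c, φ'.g (χ c) = φ.g c)

/-- A cofibration: `l_n` is injective and `l_n` lifts through `l_m`. -/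
def Cob.IsCofib {m n : Type} (φ : Cob m n) : Prop :=
  Function.Injective φ.ln ∧ ∃ u : n → m, ∀ y, φ.lm (u y) = φ.ln y

/-- A fibration: `l_m` is injective, `l_n` is surjective, and `g ∘ l_m = 0`. -/
def Cob.IsFib {m n : Type} (φ : Cob m n) : Prop :=
  Function.Injective φ.lm ∧ Function.Surjective φ.ln ∧ ∀ x, φ.g (φ.lm x) = 0

/-- The five local conditions of Definition 5.2.1 defining an oriented 1-cobordism
between signed finite sets (signs recorded by Boolean functions, `true` = `+`). -/
def IsOriented {m n C : Type} (sm : m → Bool) (sn : n → Bool)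
    (lm : m → C) (ln : n → C) : Prop :=
  ∀ c : C,
    (∃ a b : m, sm a = true ∧ sm b = false ∧ a ≠ b ∧
      (∀ x, lm x = c ↔ (x = a ∨ x = b)) ∧ (∀ y, ln y ≠ c)) ∨
    (∃ a b : n, sn a = true ∧ sn b = false ∧ a ≠ b ∧
      (∀ y, ln y = c ↔ (y = a ∨ y = b)) ∧ (∀ x, lm x ≠ c)) ∨
    (∃ a : m, ∃ b : n, sm a = sn b ∧
      (∀ x, lm x = c ↔ x = a) ∧ (∀ y, ln y = c ↔ y = b)) ∨
    ((∀ x, lm x ≠ c) ∧ (∀ y, ln y ≠ c))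

/-- The left leg of the cup-cap span, `(x,1) ↦ x`, `(x,2),(x,3) ↦ x+n`. -/
def capMapL (n : ℕ) : (Fin n ⊕ (Fin n ⊕ Fin n)) → (Fin n ⊕ Fin n) :=
  Sum.elim Sum.inl (Sum.elim Sum.inr Sum.inr)

/-- The right leg of the cup-cap span, `(x,3) ↦ x`, `(x,1),(x,2) ↦ x+n`. -/
def capMapR (n : ℕ) : (Fin n ⊕ (Fin n ⊕ Fin n)) → (Fin n ⊕ Fin n) :=
  Sum.elim Sum.inr (Sum.elim Sum.inr Sum.inl)


def eMap (n : ℕ) : (Fin n ⊕ Fin n) ⊕ (Fin n ⊕ Fin n) → Fin n :=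
  Sum.elim (Sum.elim id id) (Sum.elim id id)

lemma rel_e {n : ℕ} {p q} (h : PRel (capMapL n) (capMapR n) p q) :
    eMap n p = eMap n q := by
  obtain ⟨z, hp, hq⟩ := h
  subst hp; subst hq
  rcases z with x | x | x <;> rfl

lemma mk_eq_norm {n : ℕ} (p) :
    Quot.mk (PRel (capMapL n) (capMapR n)) p =
      Quot.mk _ (Sum.inr (Sum.inr (eMap n p))) := by
  rcases p with (x | x) | (x | x)
  · exact Quot.sound ⟨Sum.inl x, rfl, rfl⟩
  · exact Quot.sound ⟨Sum.inr (Sum.inl x), rfl, rfl⟩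
  · have h1 : Quot.mk (PRel (capMapL n) (capMapR n)) (Sum.inl (Sum.inr x)) =
        Quot.mk _ (Sum.inr (Sum.inl x)) := Quot.sound ⟨Sum.inr (Sum.inr x), rfl, rfl⟩
    have h2 : Quot.mk (PRel (capMapL n) (capMapR n)) (Sum.inl (Sum.inr x)) =
        Quot.mk _ (Sum.inr (Sum.inr x)) := Quot.sound ⟨Sum.inr (Sum.inl x), rfl, rfl⟩
    exact h1.symm.trans h2
  · rfl

lemma mk_iff {n : ℕ} (p q) :
    Quot.mk (PRel (capMapL n) (capMapR n)) p = Quot.mk _ q ↔ eMap n p = eMap n q := by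
  constructor
  · intro h
    exact congrArg (Quot.lift (eMap n) (fun a b hab => rel_e hab)) h
  · intro h
    rw [mk_eq_norm p, mk_eq_norm q, h]

noncomputable def pushEquiv (n : ℕ) : Pushout (capMapL n) (capMapR n) ≃ Fin n where
  toFun := Quot.lift (eMap n) (fun a b hab => rel_e hab)
  invFun := fun x => Quot.mk _ (Sum.inr (Sum.inr x))
  left_inv := by
    intro y
    induction y using Quot.ind with
    | _ p => exact (mk_eq_norm p).symm
  right_inv := fun x => rfl

/-- in the cup-cap composite, the pushout identifies elements of
`2n ⊔ 2n` exactly when congruent mod `n`, the pushout has exactly `n` elements,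
and the composite genus of each element is `1 − 4 + 3 = 0`. -/
theorem stmt_13 (n : ℕ) (hn : 1 ≤ n) :
    (∀ p q : (Fin n ⊕ Fin n) ⊕ (Fin n ⊕ Fin n),
        (Quot.mk (PRel (capMapL n) (capMapR n)) p =
         Quot.mk (PRel (capMapL n) (capMapR n)) q ↔
          Sum.elim (Sum.elim id id) (Sum.elim id id) p =
          Sum.elim (Sum.elim id id) (Sum.elim id id) q)) ∧
    Nat.card (Pushout (capMapL n) (capMapR n)) = n ∧
    ∀ y : Pushout (capMapL n) (capMapR n),
      compGenus (capMapL n) (capMapR n) (fun _ => (0 : ℤ)) (fun _ => (0 : ℤ)) y = 0 := by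
  refine ⟨fun p q => mk_iff p q, ?_, ?_⟩
  · rw [Nat.card_congr (pushEquiv n), Nat.card_eq_fintype_card, Fintype.card_fin]
  · intro y
    induction y using Quot.ind with
    | _ p =>
    have hA : (Finset.univ.filter (fun a : Fin n ⊕ Fin n =>
        pInl (capMapL n) (capMapR n) a = Quot.mk _ p)) = {Sum.inl (eMap n p), Sum.inr (eMap n p)} := by
      ext a
      simp only [Finset.mem_filter, Finset.mem_univ, true_and, Finset.mem_insert,
        Finset.mem_singleton]
      rw [show (pInl (capMapL n) (capMapR n) a = Quot.mk (PRel (capMapL n) (capMapR n)) p) ↔ eMap n (Sum.inl a) = eMap n p from mk_iff _ _]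
      rcases a with a | a <;> simp [eMap]
    have hB : (Finset.univ.filter (fun b : Fin n ⊕ Fin n =>
        pInr (capMapL n) (capMapR n) b = Quot.mk _ p)) = {Sum.inl (eMap n p), Sum.inr (eMap n p)} := by
      ext b
      simp only [Finset.mem_filter, Finset.mem_univ, true_and, Finset.mem_insert,
        Finset.mem_singleton]
      rw [show (pInr (capMapL n) (capMapR n) b = Quot.mk (PRel (capMapL n) (capMapR n)) p) ↔ eMap n (Sum.inr b) = eMap n p from mk_iff _ _]
      rcases b with b | b <;> simp [eMap]
    have hK : (Finset.univ.filter (fun z : Fin n ⊕ (Fin n ⊕ Fin n) =>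
        pInl (capMapL n) (capMapR n) (capMapL n z) = Quot.mk _ p)) =
        {Sum.inl (eMap n p), Sum.inr (Sum.inl (eMap n p)), Sum.inr (Sum.inr (eMap n p))} := by
      ext z
      simp only [Finset.mem_filter, Finset.mem_univ, true_and, Finset.mem_insert,
        Finset.mem_singleton]
      rw [show (pInl (capMapL n) (capMapR n) (capMapL n z) = Quot.mk (PRel (capMapL n) (capMapR n)) p) ↔
        eMap n (Sum.inl (capMapL n z)) = eMap n p from mk_iff _ _]
      rcases z with z | z | z <;> simp [eMap, capMapL]
    unfold compGenus
    rw [hA, hB, hK]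
    simp [Finset.sum_pair, Finset.card_insert_of_notMem, Finset.mem_insert]
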